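/- arXiv:2405.19016 — 2 statements merged into one kernel-verified Lean document; each statement's English description precedes it below -/
import Mathlib

section
/- Let p and p0 be the densities of the Gaussian distributions N(μ, σ²) and N(μ0, σ0²) respectively (σ, σ0 > 0). Then the variance under N(μ0, σ0²) of the log-likelihood ratio satisfies Var_{p0}( log(p0/p) ) = σ0²(μ0 − μ)²/σ⁴ + (σ² − σ0²)²/(2σ⁴). -/
open MeasureTheory ProbabilityTheory Real
open scoped NNReal ENNReal

noncomputable section

lemma integrable_pow_mul_exp {b : ℝ} (hb : 0 < b) (n : ℕ) :
    Integrable fun x : ℝ => x ^ n * rexp (-b * x ^ 2) := by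
  have h := integrable_rpow_mul_exp_neg_mul_sq hb (s := (n : ℝ))
    (neg_one_lt_zero.trans_le (Nat.cast_nonneg n))
  simpa [Real.rpow_natCast] using h

/-- the moment integral -/
def J (b : ℝ) (n : ℕ) : ℝ := ∫ x : ℝ, x ^ n * rexp (-b * x ^ 2)

lemma J_rec {b : ℝ} (hb : 0 < b) (n : ℕ) :
    J b (n + 2) = ((n : ℝ) + 1) / (2 * b) * J b n := by
  have key : (∫ x : ℝ, (((n : ℝ) + 1) * (x ^ n * rexp (-b * x ^ 2))
      - (2 * b) * (x ^ (n + 2) * rexp (-b * x ^ 2)))) = 0 := by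
    apply integral_eq_zero_of_hasDerivAt_of_integrable
      (f := fun x : ℝ => x ^ (n + 1) * rexp (-b * x ^ 2))
    · intro x
      have h1 : HasDerivAt (fun x : ℝ => x ^ (n + 1)) (((n : ℝ) + 1) * x ^ n) x := by
        simpa using hasDerivAt_pow (n + 1) x
      have h2 : HasDerivAt (fun x : ℝ => rexp (-b * x ^ 2)) (rexp (-b * x ^ 2) * (-b * (2 * x))) x := by
        have : HasDerivAt (fun x : ℝ => -b * x ^ 2) (-b * (2 * x)) x := by
          simpa using ((hasDerivAt_pow 2 x).const_mul (-b))
        exact this.exp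
      have : HasDerivAt (fun x : ℝ => x ^ (n + 1) * rexp (-b * x ^ 2)) _ x := h1.mul h2
      exact this.congr_deriv (by ring)
    · exact ((integrable_pow_mul_exp hb n).const_mul _).sub
        (((integrable_pow_mul_exp hb (n + 2))).const_mul _)
    · exact integrable_pow_mul_exp hb (n + 1)
  rw [integral_sub ((integrable_pow_mul_exp hb n).const_mul _)
      ((integrable_pow_mul_exp hb (n + 2)).const_mul _),
    MeasureTheory.integral_const_mul, MeasureTheory.integral_const_mul, sub_eq_zero] at key
  have hb' : (2 : ℝ) * b ≠ 0 := by positivity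
  rw [J, J, div_mul_eq_mul_div, eq_div_iff hb']
  linear_combination -key

lemma J_zero {b : ℝ} (hb : 0 < b) : J b 0 = √(π / b) := by
  simpa [J] using integral_gaussian b

lemma J_one {b : ℝ} (hb : 0 < b) : J b 1 = 0 := by
  have key : (∫ x : ℝ, ((-(2 * b)) * (x ^ 1 * rexp (-b * x ^ 2)))) = 0 := by
    apply integral_eq_zero_of_hasDerivAt_of_integrable
      (f := fun x : ℝ => rexp (-b * x ^ 2))
    · intro x
      have : HasDerivAt (fun x : ℝ => -b * x ^ 2) (-b * (2 * x)) x := by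
        simpa using ((hasDerivAt_pow 2 x).const_mul (-b))
      exact (this.exp : HasDerivAt (fun x : ℝ => rexp (-b * x ^ 2)) _ x).congr_deriv (by ring)
    · exact (integrable_pow_mul_exp hb 1).const_mul _
    · exact integrable_exp_neg_mul_sq hb
  rw [MeasureTheory.integral_const_mul] at key
  have hb' : -(2 * b) ≠ 0 := by simp; positivity
  rw [J]
  exact (mul_eq_zero.mp key).resolve_left hb'

lemma J_two {b : ℝ} (hb : 0 < b) : J b 2 = √(π / b) / (2 * b) := by
  have h := J_rec hb 0
  rw [J_zero hb] at h
  norm_num at h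
  rw [h]
  ring

lemma J_three {b : ℝ} (hb : 0 < b) : J b 3 = 0 := by
  have := J_rec hb 1
  rw [J_one hb] at this
  simpa using this

lemma J_four {b : ℝ} (hb : 0 < b) : J b 4 = 3 * √(π / b) / (4 * b ^ 2) := by
  have h := J_rec hb 2
  rw [J_two hb] at h
  norm_num at h
  rw [h]
  field_simp
  ring

lemma gaussian_integral_eq {m : ℝ} {v : ℝ≥0} (hv : v ≠ 0) (g : ℝ → ℝ) :
    ∫ x, g x ∂(gaussianReal m v) = ∫ x, gaussianPDFReal m v x * g x := by
  rw [gaussianReal_of_var_ne_zero m hv]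
  have h1 : (gaussianPDF m v) = fun x => ((gaussianPDFReal m v x).toNNReal : ℝ≥0∞) := rfl
  rw [h1, integral_withDensity_eq_integral_smul
    ((measurable_gaussianPDFReal m v).real_toNNReal) g]
  congr 1
  funext x
  simp [NNReal.smul_def, Real.coe_toNNReal _ (gaussianPDFReal_nonneg m v x)]

lemma gaussian_integrable_iff {m : ℝ} {v : ℝ≥0} (hv : v ≠ 0) (g : ℝ → ℝ) :
    Integrable g (gaussianReal m v) ↔
      Integrable (fun x => gaussianPDFReal m v x * g x) volume := by
  rw [gaussianReal_of_var_ne_zero m hv]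
  have h1 : (gaussianPDF m v) = fun x => ((gaussianPDFReal m v x).toNNReal : ℝ≥0∞) := rfl
  rw [h1, integrable_withDensity_iff_integrable_smul
    ((measurable_gaussianPDFReal m v).real_toNNReal)]
  constructor <;> intro h <;> apply h.congr <;> filter_upwards with x <;>
    simp [NNReal.smul_def, Real.coe_toNNReal _ (gaussianPDFReal_nonneg m v x)]

lemma gaussian_shift {m : ℝ} {v : ℝ≥0} (q : ℝ → ℝ) :
    ∫ x, gaussianPDFReal m v x * q (x - m) = ∫ t, gaussianPDFReal 0 v t * q t := by
  have h : ∀ x : ℝ, gaussianPDFReal m v x * q (x - m)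
      = (fun t => gaussianPDFReal 0 v t * q t) (x - m) := by
    intro x; simp [gaussianPDFReal]
  simp_rw [h]
  exact integral_sub_right_eq_self (fun t => gaussianPDFReal 0 v t * q t) m

lemma pdf0_eq {v : ℝ≥0} (t : ℝ) :
    gaussianPDFReal 0 v t = (√(2 * π * v))⁻¹ * rexp (-(2 * (v : ℝ))⁻¹ * t ^ 2) := by
  rw [gaussianPDFReal]
  congr 1
  rw [Real.exp_eq_exp]
  ring


lemma integrable_gauss_poly {v : ℝ≥0} (hv : 0 < (v : ℝ)) (a0 a1 a2 a3 a4 : ℝ) :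
    Integrable (fun t : ℝ =>
      gaussianPDFReal 0 v t * (a4 * t ^ 4 + a3 * t ^ 3 + a2 * t ^ 2 + a1 * t + a0)) := by
  have hb : 0 < (2 * (v : ℝ))⁻¹ := by positivity
  set b := (2 * (v : ℝ))⁻¹ with hbdef
  have hI : Integrable (fun t : ℝ =>
      a4 * (t ^ 4 * rexp (-b * t ^ 2)) + (a3 * (t ^ 3 * rexp (-b * t ^ 2))
        + (a2 * (t ^ 2 * rexp (-b * t ^ 2)) + (a1 * (t ^ 1 * rexp (-b * t ^ 2))
        + a0 * (t ^ 0 * rexp (-b * t ^ 2)))))) :=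
    ((integrable_pow_mul_exp hb 4).const_mul a4).add
      (((integrable_pow_mul_exp hb 3).const_mul a3).add
      (((integrable_pow_mul_exp hb 2).const_mul a2).add
      (((integrable_pow_mul_exp hb 1).const_mul a1).add
      ((integrable_pow_mul_exp hb 0).const_mul a0))))
  have key : (fun t : ℝ =>
      gaussianPDFReal 0 v t * (a4 * t ^ 4 + a3 * t ^ 3 + a2 * t ^ 2 + a1 * t + a0))
      = fun t : ℝ => (√(2 * π * v))⁻¹ *
        (a4 * (t ^ 4 * rexp (-b * t ^ 2)) + (a3 * (t ^ 3 * rexp (-b * t ^ 2))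
          + (a2 * (t ^ 2 * rexp (-b * t ^ 2)) + (a1 * (t ^ 1 * rexp (-b * t ^ 2))
          + a0 * (t ^ 0 * rexp (-b * t ^ 2)))))) := by
    funext t
    rw [pdf0_eq]
    ring
  rw [key]
  exact hI.const_mul _

lemma integral_gauss_poly {v : ℝ≥0} (hv : 0 < (v : ℝ)) (a0 a1 a2 a3 a4 : ℝ) :
    ∫ t : ℝ, gaussianPDFReal 0 v t * (a4 * t ^ 4 + a3 * t ^ 3 + a2 * t ^ 2 + a1 * t + a0)
      = 3 * a4 * (v : ℝ) ^ 2 + a2 * (v : ℝ) + a0 := by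
  have hb : 0 < (2 * (v : ℝ))⁻¹ := by positivity
  set b := (2 * (v : ℝ))⁻¹ with hbdef
  have hI0 : Integrable (fun t : ℝ => a0 * (t ^ 0 * rexp (-b * t ^ 2))) :=
    (integrable_pow_mul_exp hb 0).const_mul a0
  have hI1 : Integrable (fun t : ℝ => a1 * (t ^ 1 * rexp (-b * t ^ 2))) :=
    (integrable_pow_mul_exp hb 1).const_mul a1
  have hI2 : Integrable (fun t : ℝ => a2 * (t ^ 2 * rexp (-b * t ^ 2))) :=
    (integrable_pow_mul_exp hb 2).const_mul a2
  have hI3 : Integrable (fun t : ℝ => a3 * (t ^ 3 * rexp (-b * t ^ 2))) :=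
    (integrable_pow_mul_exp hb 3).const_mul a3
  have hI4 : Integrable (fun t : ℝ => a4 * (t ^ 4 * rexp (-b * t ^ 2))) :=
    (integrable_pow_mul_exp hb 4).const_mul a4
  have hR1 : Integrable (fun t : ℝ => a1 * (t ^ 1 * rexp (-b * t ^ 2))
      + a0 * (t ^ 0 * rexp (-b * t ^ 2))) := hI1.add hI0
  have hR2 : Integrable (fun t : ℝ => a2 * (t ^ 2 * rexp (-b * t ^ 2))
      + (a1 * (t ^ 1 * rexp (-b * t ^ 2)) + a0 * (t ^ 0 * rexp (-b * t ^ 2)))) := hI2.add hR1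
  have hR3 : Integrable (fun t : ℝ => a3 * (t ^ 3 * rexp (-b * t ^ 2))
      + (a2 * (t ^ 2 * rexp (-b * t ^ 2)) + (a1 * (t ^ 1 * rexp (-b * t ^ 2))
      + a0 * (t ^ 0 * rexp (-b * t ^ 2))))) := hI3.add hR2
  have key : (fun t : ℝ =>
      gaussianPDFReal 0 v t * (a4 * t ^ 4 + a3 * t ^ 3 + a2 * t ^ 2 + a1 * t + a0))
      = fun t : ℝ => (√(2 * π * v))⁻¹ *
        (a4 * (t ^ 4 * rexp (-b * t ^ 2)) + (a3 * (t ^ 3 * rexp (-b * t ^ 2))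
          + (a2 * (t ^ 2 * rexp (-b * t ^ 2)) + (a1 * (t ^ 1 * rexp (-b * t ^ 2))
          + a0 * (t ^ 0 * rexp (-b * t ^ 2)))))) := by
    funext t
    rw [pdf0_eq]
    ring
  rw [key, MeasureTheory.integral_const_mul,
    integral_add hI4 hR3, integral_add hI3 hR2, integral_add hI2 hR1, integral_add hI1 hI0]
  simp only [MeasureTheory.integral_const_mul]
  have h0 : (∫ t : ℝ, t ^ 0 * rexp (-b * t ^ 2)) = J b 0 := rfl
  have h1 : (∫ t : ℝ, t ^ 1 * rexp (-b * t ^ 2)) = J b 1 := rfl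
  have h2 : (∫ t : ℝ, t ^ 2 * rexp (-b * t ^ 2)) = J b 2 := rfl
  have h3 : (∫ t : ℝ, t ^ 3 * rexp (-b * t ^ 2)) = J b 3 := rfl
  have h4 : (∫ t : ℝ, t ^ 4 * rexp (-b * t ^ 2)) = J b 4 := rfl
  rw [h0, h1, h2, h3, h4, J_zero hb, J_one hb, J_two hb, J_three hb, J_four hb]
  have hπb : π / b = 2 * π * (v : ℝ) := by
    rw [hbdef]
    field_simp
  rw [hπb]
  have hpos : (0 : ℝ) < 2 * π * (v : ℝ) := by positivity
  have hKsq : √(2 * π * (v : ℝ)) * √(2 * π * (v : ℝ)) = 2 * π * (v : ℝ) :=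
    Real.mul_self_sqrt hpos.le
  have hKpos : (0 : ℝ) < √(2 * π * (v : ℝ)) := Real.sqrt_pos.mpr hpos
  have hvne : (v : ℝ) ≠ 0 := ne_of_gt hv
  have hπne : π ≠ 0 := ne_of_gt Real.pi_pos
  rw [hbdef]
  field_simp
  nlinarith [hKsq, hKpos]


/-- Density of the normal distribution `N(m, σ²)` at `y` (with standard deviation `σ`). -/
def gaussPDF (m σ y : ℝ) : ℝ :=
  Real.exp (-(y - m) ^ 2 / (2 * σ ^ 2)) / (σ * Real.sqrt (2 * Real.pi))

/-- Lemma `lm_boundfor_variance_KL`: if `p`, `p0` are the densities of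
`N(μ, σ²)` and `N(μ0, σ0²)`, then
`Var_{p0}(log (p0/p)) = σ0²(μ0-μ)²/σ⁴ + (σ²-σ0²)²/(2σ⁴)`. -/
theorem statement_13 (μ μ0 σ σ0 : ℝ) (hσ : 0 < σ) (hσ0 : 0 < σ0) :
    variance (fun u => Real.log (gaussPDF μ0 σ0 u / gaussPDF μ σ u))
        (gaussianReal μ0 (σ0 ^ 2).toNNReal)
      = σ0 ^ 2 * (μ0 - μ) ^ 2 / σ ^ 4 + (σ ^ 2 - σ0 ^ 2) ^ 2 / (2 * σ ^ 4) := by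
  have hσne : σ ≠ 0 := ne_of_gt hσ
  have hσ0ne : σ0 ≠ 0 := ne_of_gt hσ0
  have h2π : (0 : ℝ) < √(2 * π) := Real.sqrt_pos.mpr (by positivity)
  set V : ℝ≥0 := (σ0 ^ 2).toNNReal with hVdef
  have hVc : (V : ℝ) = σ0 ^ 2 := Real.coe_toNNReal _ (sq_nonneg σ0)
  have hVpos : 0 < (V : ℝ) := by rw [hVc]; positivity
  have hV : V ≠ 0 := by
    intro h
    rw [h] at hVpos
    simp at hVpos
  set A : ℝ := 1 / (2 * σ ^ 2) - 1 / (2 * σ0 ^ 2) with hA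
  set B : ℝ := (μ0 - μ) / σ ^ 2 with hB
  set C : ℝ := (μ0 - μ) ^ 2 / (2 * σ ^ 2)
      + (Real.log (σ * √(2 * π)) - Real.log (σ0 * √(2 * π))) with hC
  have hfeq : (fun u => Real.log (gaussPDF μ0 σ0 u / gaussPDF μ σ u))
      = fun u => A * (u - μ0) ^ 2 + B * (u - μ0) + C := by
    funext u
    rw [gaussPDF, gaussPDF, Real.log_div (by positivity) (by positivity),
      Real.log_div (Real.exp_ne_zero _) (by positivity),
      Real.log_div (Real.exp_ne_zero _) (by positivity),
      Real.log_exp, Real.log_exp, hA, hB, hC]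
    field_simp
    ring
  rw [hfeq]
  set P : ℝ → ℝ := fun u => A * (u - μ0) ^ 2 + B * (u - μ0) + C with hP
  have hcont : Continuous P := by fun_prop
  have hmeas : AEStronglyMeasurable P (gaussianReal μ0 V) := hcont.aestronglyMeasurable
  have hpdfshift : ∀ x : ℝ, gaussianPDFReal μ0 V x = gaussianPDFReal 0 V (x - μ0) := by
    intro x
    simp [gaussianPDFReal]
  have hsq : Integrable (fun x => P x ^ 2) (gaussianReal μ0 V) := by
    rw [gaussian_integrable_iff hV]
    refine ((integrable_gauss_poly hVpos (C ^ 2) (2 * B * C) (2 * A * C + B ^ 2)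
      (2 * A * B) (A ^ 2)).comp_sub_right μ0).congr ?_
    filter_upwards with x
    rw [hpdfshift x, hP]
    simp only []
    ring
  have hmem : MemLp P 2 (gaussianReal μ0 V) := (memLp_two_iff_integrable_sq hmeas).mpr hsq
  rw [variance_eq_sub hmem]
  have hmean : ∫ x, P x ∂(gaussianReal μ0 V) = A * σ0 ^ 2 + C := by
    rw [gaussian_integral_eq hV]
    have h1 : (fun x => gaussianPDFReal μ0 V x * P x)
        = fun x => gaussianPDFReal 0 V (x - μ0) *
          (0 * (x - μ0) ^ 4 + 0 * (x - μ0) ^ 3 + A * (x - μ0) ^ 2 + B * (x - μ0) + C) := by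
      funext x
      rw [hpdfshift x, hP]
      simp only []
      ring
    rw [h1]
    have h2 := (integral_gauss_poly hVpos C B A 0 0)
    rw [show (∫ x, gaussianPDFReal 0 V (x - μ0) *
          (0 * (x - μ0) ^ 4 + 0 * (x - μ0) ^ 3 + A * (x - μ0) ^ 2 + B * (x - μ0) + C))
        = ∫ t, gaussianPDFReal 0 V t * (0 * t ^ 4 + 0 * t ^ 3 + A * t ^ 2 + B * t + C) from
      integral_sub_right_eq_self (fun t => gaussianPDFReal 0 V t *
        (0 * t ^ 4 + 0 * t ^ 3 + A * t ^ 2 + B * t + C)) μ0]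
    rw [h2, hVc]
    ring
  have hsqmean : ∫ x, P x ^ 2 ∂(gaussianReal μ0 V)
      = 3 * A ^ 2 * σ0 ^ 4 + (2 * A * C + B ^ 2) * σ0 ^ 2 + C ^ 2 := by
    rw [gaussian_integral_eq hV]
    have h1 : (fun x => gaussianPDFReal μ0 V x * P x ^ 2)
        = fun x => gaussianPDFReal 0 V (x - μ0) *
          (A ^ 2 * (x - μ0) ^ 4 + (2 * A * B) * (x - μ0) ^ 3
            + (2 * A * C + B ^ 2) * (x - μ0) ^ 2 + (2 * B * C) * (x - μ0) + C ^ 2) := by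
      funext x
      rw [hpdfshift x, hP]
      simp only []
      ring
    rw [h1]
    have h2 := (integral_gauss_poly hVpos (C ^ 2) (2 * B * C) (2 * A * C + B ^ 2)
      (2 * A * B) (A ^ 2))
    rw [show (∫ x, gaussianPDFReal 0 V (x - μ0) *
          (A ^ 2 * (x - μ0) ^ 4 + (2 * A * B) * (x - μ0) ^ 3
            + (2 * A * C + B ^ 2) * (x - μ0) ^ 2 + (2 * B * C) * (x - μ0) + C ^ 2))
        = ∫ t, gaussianPDFReal 0 V t * (A ^ 2 * t ^ 4 + (2 * A * B) * t ^ 3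
            + (2 * A * C + B ^ 2) * t ^ 2 + (2 * B * C) * t + C ^ 2) from
      integral_sub_right_eq_self (fun t => gaussianPDFReal 0 V t *
        (A ^ 2 * t ^ 4 + (2 * A * B) * t ^ 3 + (2 * A * C + B ^ 2) * t ^ 2
          + (2 * B * C) * t + C ^ 2)) μ0]
    rw [h2, hVc]
    ring
  simp only [Pi.pow_apply]
  rw [hsqmean, hmean, hA, hB]
  field_simp
  ring
end
end

section
/- Let ε ∈ (0, 1/2) and set β = 8·log(1/ε). Define h_β(x) = log x − (x − 1) + β(x − 1)²/2 on (0, ∞). Then h_β(x) ≥ 0 for all x ≥ ε. -/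
private lemma key_hasDerivAt (y : ℝ) (hy : 0 < y) :
    HasDerivAt (fun x : ℝ => Real.log x - (x - 1) + 2 * (x - 1) ^ 2)
      (1 / y - 1 + 2 * (2 * (y - 1))) y := by
  have h1 : HasDerivAt Real.log (1 / y) y := by
    simpa [one_div] using Real.hasDerivAt_log hy.ne'
  have h2 : HasDerivAt (fun x : ℝ => x - 1) 1 y := (hasDerivAt_id y).sub_const 1
  have h3 : HasDerivAt (fun x : ℝ => (x - 1) ^ 2) (2 * (y - 1)) y := by
    simpa using h2.fun_pow 2
  exact (h1.sub h2).add (h3.const_mul 2)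

private lemma key (x : ℝ) (hx : 1 / 2 ≤ x) :
    0 ≤ Real.log x - (x - 1) + 2 * (x - 1) ^ 2 := by
  set f : ℝ → ℝ := fun x : ℝ => Real.log x - (x - 1) + 2 * (x - 1) ^ 2 with hf
  have hf1 : f 1 = 0 := by simp [hf]
  have hderiv : ∀ y : ℝ, 0 < y → deriv f y = 1 / y - 1 + 2 * (2 * (y - 1)) :=
    fun y hy => (key_hasDerivAt y hy).deriv
  have hcont : ∀ s : Set ℝ, s ⊆ Set.Ioi (0:ℝ) → ContinuousOn f s := by
    intro s hs y hy
    exact ((key_hasDerivAt y (hs hy)).differentiableAt.continuousAt).continuousWithinAt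
  rcases le_total x 1 with h1 | h1
  · -- antitone on [1/2, 1]
    have hanti : AntitoneOn f (Set.Icc (1/2 : ℝ) 1) := by
      apply antitoneOn_of_deriv_nonpos (convex_Icc _ _)
      · exact hcont _ (fun y hy => by
          have := (Set.mem_Icc.mp hy).1; simp only [Set.mem_Ioi]; linarith)
      · intro y hy
        rw [interior_Icc] at hy
        obtain ⟨hy1, hy2⟩ := hy
        exact (key_hasDerivAt y (by linarith)).differentiableAt.differentiableWithinAt
      · intro y hy
        rw [interior_Icc] at hy
        obtain ⟨hy1, hy2⟩ := hy
        have hy0 : 0 < y := by linarith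
        rw [hderiv y hy0]
        have h4 : (1 / y - 1 + 2 * (2 * (y - 1))) = (y - 1) * (4 * y - 1) / y := by
          field_simp; ring
        rw [h4]
        apply div_nonpos_of_nonpos_of_nonneg _ hy0.le
        nlinarith
    have := hanti (Set.mem_Icc.mpr ⟨hx, h1⟩) (Set.mem_Icc.mpr ⟨by norm_num, le_refl 1⟩) h1
    rw [hf1] at this
    exact this
  · -- monotone on [1, ∞)
    have hmono : MonotoneOn f (Set.Ici (1:ℝ)) := by
      apply monotoneOn_of_deriv_nonneg (convex_Ici _)
      · exact hcont _ (fun y hy => by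
          simp only [Set.mem_Ici] at hy; simp only [Set.mem_Ioi]; linarith)
      · intro y hy
        rw [interior_Ici] at hy
        simp only [Set.mem_Ioi] at hy
        exact (key_hasDerivAt y (by linarith)).differentiableAt.differentiableWithinAt
      · intro y hy
        rw [interior_Ici] at hy
        have hy0 : 0 < y := by simp only [Set.mem_Ioi] at hy; linarith
        rw [hderiv y hy0]
        have h4 : (1 / y - 1 + 2 * (2 * (y - 1))) = (y - 1) * (4 * y - 1) / y := by
          field_simp; ring
        rw [h4]
        apply div_nonneg _ hy0.le
        simp only [Set.mem_Ioi] at hy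
        nlinarith
    have := hmono (Set.mem_Ici.mpr (le_refl 1)) (Set.mem_Ici.mpr h1) h1
    rw [hf1] at this
    exact this

/-- Lemma `lm_bound_error_variance_Pati2014`: let `ε ∈ (0, 1/2)` and
`β = 8 log(1/ε)`; then `h_β(x) = log x - (x-1) + β(x-1)²/2 ≥ 0` for all `x ≥ ε`. -/
theorem statement_14 (ε : ℝ) (hε0 : 0 < ε) (hε : ε < 1 / 2) (x : ℝ) (hx : ε ≤ x) :
    0 ≤ Real.log x - (x - 1) + 8 * Real.log (1 / ε) * (x - 1) ^ 2 / 2 := by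
  have hx0 : 0 < x := lt_of_lt_of_le hε0 hx
  have hL2 : Real.log 2 ≤ Real.log (1 / ε) := by
    apply Real.log_le_log (by norm_num)
    rw [le_div_iff₀ hε0]; linarith
  have hlog2 : (1/2 : ℝ) ≤ Real.log 2 := by
    have := Real.log_two_gt_d9; linarith
  have hL : (1/2 : ℝ) ≤ Real.log (1 / ε) := le_trans hlog2 hL2
  rcases le_total (1/2 : ℝ) x with h | h
  · -- use key lemma: coefficient 4*L ≥ 2
    have hk := key x h
    have hsq : (0:ℝ) ≤ (x - 1)^2 := sq_nonneg _
    nlinarith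
  · -- ε ≤ x ≤ 1/2
    have hlogx : -Real.log (1 / ε) ≤ Real.log x := by
      rw [Real.log_div one_ne_zero hε0.ne', Real.log_one]
      simp only [zero_sub, neg_neg]
      exact Real.log_le_log hε0 hx
    have hsq : (1/4 : ℝ) ≤ (x - 1)^2 := by nlinarith
    nlinarith [mul_le_mul_of_nonneg_left hsq (by linarith : (0:ℝ) ≤ 4 * Real.log (1 / ε))]
end
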